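/- Let (x_n) be an interval-filling sequence and suppose there exist indices k < m with x_m < r_m and x_k + x_m < r_k, where r_j = ∑_{n>j} x_n. Then some point of the achievement set has at least 4 distinct subsum representations, i.e., max rng(f) ≥ 4. -/

import Mathlib

open Set

/-- The achievement set of a sequence: all subsums. -/
noncomputable def achSet (x : ℕ → ℝ) : Set ℝ :=
  {t | ∃ S : Set ℕ, ∑' n : S, x n = t}

/-- The cardinal function: the number of representations of `t` as a subsum. -/
noncomputable def cardFun (x : ℕ → ℝ) (t : ℝ) : Cardinal :=
  Cardinal.mk {S : Set ℕ // ∑' n : S, x n = t}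

/-- The tail sum `r_k = ∑_{n > k} x n`. -/
noncomputable def tailSum (x : ℕ → ℝ) (k : ℕ) : ℝ := ∑' n, x (k + 1 + n)

/-- Prepending a term to a sequence. -/
def prepend (y : ℝ) (x : ℕ → ℝ) : ℕ → ℝ := fun n =>
  match n with
  | 0 => y
  | Nat.succ m => x m


open Filter

section aux
variable {x : ℕ → ℝ}

private lemma tailSum_shift (k : ℕ) : tailSum x k = ∑' n, x (n + (k + 1)) :=
  tsum_congr fun n => congrArg x (by omega)

private lemma tailSum_succ (hsum : Summable x) (k : ℕ) :
    tailSum x k = x (k + 1) + tailSum x (k + 1) := by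
  have hs : Summable fun n => x (n + (k + 1)) := (summable_nat_add_iff (k + 1)).2 hsum
  rw [tailSum_shift, Summable.tsum_eq_zero_add hs]
  congr 1
  · exact congrArg x (by omega)
  · rw [tailSum_shift]
    exact tsum_congr fun n => congrArg x (by omega)

private lemma tailSum_nonneg (hpos : ∀ n, 0 < x n) (k : ℕ) : 0 ≤ tailSum x k :=
  tsum_nonneg fun _ => (hpos _).le

private lemma tailSum_pos (hpos : ∀ n, 0 < x n) (hsum : Summable x) (k : ℕ) :
    0 < tailSum x k := by
  rw [tailSum_succ hsum k]
  have := tailSum_nonneg hpos (x := x) (k + 1)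
  have := hpos (k + 1)
  linarith

private lemma tailSum_telescope (hsum : Summable x) {k m : ℕ} (h : k ≤ m) :
    tailSum x k = (∑ j ∈ Finset.Ioc k m, x j) + tailSum x m := by
  induction m, h using Nat.le_induction with
  | base => simp
  | succ n hn ih =>
      rw [Finset.sum_Ioc_succ_top (by omega), ih, tailSum_succ hsum n]
      ring

private lemma tailSum_tendsto (x : ℕ → ℝ) :
    Tendsto (fun N => tailSum x N) atTop (nhds 0) := by
  have h : Tendsto (fun i => ∑' n, x (n + i)) atTop (nhds 0) := tendsto_sum_nat_add x
  have := h.comp (tendsto_add_atTop_nat 1)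
  convert this using 2 with N
  rw [tailSum_shift]
  rfl

/-- The greedy algorithm: every `s ∈ [0, r_k]` is a subsum of the terms beyond `k`. -/
private lemma greedy (hsum : Summable x) (hIF : ∀ n, x n ≤ tailSum x n)
    (k : ℕ) {s : ℝ} (h0 : 0 ≤ s) (h1 : s ≤ tailSum x k) :
    ∃ S : Set ℕ, (∀ n ∈ S, k < n) ∧ ∑' (n : S), x n = s := by
  classical
  set res : ℕ → ℝ := fun i =>
    Nat.rec s (fun i r => if x (k + 1 + i) ≤ r then r - x (k + 1 + i) else r) i with hres
  have hres0 : res 0 = s := rfl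
  have hresS : ∀ i, res (i + 1) =
      if x (k + 1 + i) ≤ res i then res i - x (k + 1 + i) else res i := fun i => rfl
  have hinv : ∀ i, 0 ≤ res i ∧ res i ≤ tailSum x (k + i) := by
    intro i
    induction i with
    | zero => exact ⟨h0, by rw [hres0]; simpa using h1⟩
    | succ i ih =>
        rw [hresS i]
        have hts : tailSum x (k + i) = x (k + i + 1) + tailSum x (k + i + 1) :=
          tailSum_succ hsum (k + i)
        have he : k + 1 + i = k + i + 1 := by omega
        have he2 : k + (i + 1) = k + i + 1 := by omega
        rw [he, he2]
        split_ifs with h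
        · constructor
          · linarith
          · linarith [ih.2]
        · have := hIF (k + i + 1)
          constructor
          · exact ih.1
          · linarith
  set S : Set ℕ := {n | ∃ i, n = k + 1 + i ∧ x (k + 1 + i) ≤ res i} with hS
  have hmem : ∀ n ∈ S, k < n := by rintro n ⟨i, rfl, -⟩; omega
  set g : ℕ → ℝ := S.indicator x with hg
  have hgsum : Summable g := hsum.indicator S
  have hchar : ∀ i, (k + 1 + i ∈ S) ↔ x (k + 1 + i) ≤ res i := by
    intro i
    constructor
    · rintro ⟨i', he, hle⟩
      have : i' = i := by omega
      rwa [this] at hle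
    · intro h; exact ⟨i, rfl, h⟩
  have hpart : ∀ i, ∑ n ∈ Finset.range (k + 1 + i), g n = s - res i := by
    intro i
    induction i with
    | zero =>
        rw [hres0]
        have : ∀ n ∈ Finset.range (k + 1), g n = 0 := by
          intro n hn
          rw [Finset.mem_range] at hn
          apply Set.indicator_of_notMem
          intro hnS
          exact absurd (hmem n hnS) (by omega)
        rw [Finset.sum_eq_zero this]
        simp
    | succ i ih =>
        have he : k + 1 + (i + 1) = (k + 1 + i) + 1 := by omega
        rw [he, Finset.sum_range_succ, ih, hresS i]
        by_cases h : x (k + 1 + i) ≤ res i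
        · rw [if_pos h]
          have : g (k + 1 + i) = x (k + 1 + i) :=
            Set.indicator_of_mem ((hchar i).2 h) x
          rw [this]; ring
        · rw [if_neg h]
          have : g (k + 1 + i) = 0 :=
            Set.indicator_of_notMem (fun hm => h ((hchar i).1 hm)) x
          rw [this]; ring
  have hres_to : Tendsto res atTop (nhds 0) := by
    have hup : Tendsto (fun i => tailSum x (k + i)) atTop (nhds 0) := by
      have := (tailSum_tendsto x).comp (tendsto_add_atTop_nat k)
      convert this using 2 with i
      simp [Function.comp, Nat.add_comm]
    exact squeeze_zero (fun i => (hinv i).1) (fun i => (hinv i).2) hup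
  have h2 : Tendsto (fun i => ∑ n ∈ Finset.range (k + 1 + i), g n) atTop (nhds s) := by
    have : Tendsto (fun i => s - res i) atTop (nhds (s - 0)) :=
      tendsto_const_nhds.sub hres_to
    rw [sub_zero] at this
    exact (tendsto_congr fun i => (hpart i)).2 this
  have h3 : Tendsto (fun i => ∑ n ∈ Finset.range (k + 1 + i), g n) atTop
      (nhds (∑' n, g n)) := by
    have := hgsum.hasSum.tendsto_sum_nat
    have hcomp := this.comp (tendsto_add_atTop_nat (k + 1))
    convert hcomp using 2 with i
    simp [Function.comp, Nat.add_comm]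
  have hgs : ∑' n, g n = s := tendsto_nhds_unique h3 h2
  exact ⟨S, hmem, by rw [tsum_subtype]; exact hgs⟩

end aux

private lemma four_le_mk {α : Type} (a b c d : α) (hab : a ≠ b) (hac : a ≠ c) (had : a ≠ d)
    (hbc : b ≠ c) (hbd : b ≠ d) (hcd : c ≠ d) : 4 ≤ Cardinal.mk α := by
  have hinj : Function.Injective ![a, b, c, d] := by
    intro i j hij
    fin_cases i <;> fin_cases j <;>
      simp_all [Matrix.cons_val_zero, Matrix.cons_val_one, Matrix.head_cons]
  calc (4 : Cardinal) = Cardinal.mk (Fin 4) := by simp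
    _ ≤ Cardinal.mk α := Cardinal.mk_le_of_injective hinj

theorem stmt11 (x : ℕ → ℝ) (hpos : ∀ n, 0 < x n) (hanti : ∀ n, x (n + 1) ≤ x n)
    (hsum : Summable x) (hIF : ∀ n, x n ≤ tailSum x n)
    (k m : ℕ) (hkm : k < m) (h1 : x m < tailSum x m) (h2 : x k + x m < tailSum x k) :
    ∃ t ∈ achSet x, 4 ≤ cardFun x t := by
  classical
  -- choose N far out
  have hmin : 0 < min (tailSum x m - x m) (tailSum x k - x k - x m) := by
    have := hpos k; have := hpos m
    exact lt_min (by linarith) (by linarith)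
  have hev : ∀ᶠ N in atTop,
      tailSum x N < min (tailSum x m - x m) (tailSum x k - x k - x m) :=
    (tailSum_tendsto x).eventually (gt_mem_nhds hmin)
  obtain ⟨N, hNlt, hmN⟩ := (hev.and (eventually_gt_atTop m)).exists
  have hrN1 : tailSum x N < tailSum x m - x m := lt_of_lt_of_le hNlt (min_le_left _ _)
  have hrN2 : tailSum x N < tailSum x k - x k - x m := lt_of_lt_of_le hNlt (min_le_right _ _)
  have hkN : k < N := lt_trans hkm hmN
  have hrNpos : 0 < tailSum x N := tailSum_pos hpos hsum N
  have hrmpos : 0 < tailSum x m := tailSum_pos hpos hsum m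
  set w : ℝ := tailSum x k - x m - tailSum x N with hw
  -- greedy representations
  obtain ⟨G, hGmem, hGsum⟩ := greedy hsum hIF N (le_of_lt (hpos N)) (hIF N)
  obtain ⟨A, hAmem, hAsum⟩ :=
    greedy hsum hIF m (s := tailSum x m - x m - tailSum x N) (by linarith)
      (by have := hpos m; linarith)
  obtain ⟨B, hBmem, hBsum⟩ :=
    greedy hsum hIF k (s := w - x k) (by rw [hw]; linarith)
      (by rw [hw]; have := hpos m; have := hpos k; linarith)
  -- the finite pieces
  set F1 : Finset ℕ := (Finset.Ioc k N).erase m with hF1def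
  set F2 : Finset ℕ := F1.erase N with hF2def
  have hmIoc : m ∈ Finset.Ioc k N := Finset.mem_Ioc.2 ⟨hkm, hmN.le⟩
  have hNF1 : N ∈ F1 := Finset.mem_erase.2 ⟨hmN.ne', Finset.mem_Ioc.2 ⟨hkN, le_refl N⟩⟩
  have hIockN : ∑ j ∈ Finset.Ioc k N, x j = tailSum x k - tailSum x N := by
    have := tailSum_telescope hsum hkN.le
    linarith
  have hIockm : ∑ j ∈ Finset.Ioc k m, x j = tailSum x k - tailSum x m := by
    have := tailSum_telescope hsum hkm.le
    linarith
  have hF1sum : ∑ j ∈ F1, x j = tailSum x k - tailSum x N - x m := by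
    have := Finset.sum_erase_add (Finset.Ioc k N) x hmIoc
    rw [hF1def]
    linarith
  have hF2sum : ∑ j ∈ F2, x j = tailSum x k - tailSum x N - x m - x N := by
    have := Finset.sum_erase_add F1 x hNF1
    rw [hF2def]
    linarith
  -- the four representing sets
  set S1 : Set ℕ := (↑F1 : Set ℕ) with hS1def
  set S2 : Set ℕ := (↑F2 : Set ℕ) ∪ G with hS2def
  set S3 : Set ℕ := (↑(Finset.Ioc k m) : Set ℕ) ∪ A with hS3def
  set S4 : Set ℕ := {k} ∪ B with hS4def
  -- disjointness facts
  have hdisj2 : Disjoint (↑F2 : Set ℕ) G := by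
    rw [Set.disjoint_left]
    intro n hn hnG
    have h1' : n ∈ Finset.Ioc k N := by
      have := Finset.mem_of_mem_erase (Finset.mem_of_mem_erase (by exact_mod_cast hn))
      exact this
    have := (Finset.mem_Ioc.1 h1').2
    have := hGmem n hnG
    omega
  have hdisj3 : Disjoint (↑(Finset.Ioc k m) : Set ℕ) A := by
    rw [Set.disjoint_left]
    intro n hn hnA
    have h1' : n ≤ m := (Finset.mem_Ioc.1 (by exact_mod_cast hn)).2
    have := hAmem n hnA
    omega
  have hdisj4 : Disjoint ({k} : Set ℕ) B := by
    rw [Set.disjoint_left]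
    intro n hn hnB
    have : n = k := hn
    have := hBmem n hnB
    omega
  -- sums of the four sets
  have hS1sum : ∑' (n : S1), x n = w := by
    rw [hS1def]
    rw [Finset.tsum_subtype' F1 x]
    rw [hF1sum, hw]
    ring
  have hS2sum : ∑' (n : S2), x n = w := by
    rw [hS2def, Summable.tsum_union_disjoint hdisj2 (hsum.subtype _) (hsum.subtype _)]
    rw [Finset.tsum_subtype' F2 x, hF2sum, hGsum, hw]
    ring
  have hS3sum : ∑' (n : S3), x n = w := by
    rw [hS3def, Summable.tsum_union_disjoint hdisj3 (hsum.subtype _) (hsum.subtype _)]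
    rw [Finset.tsum_subtype' (Finset.Ioc k m) x, hIockm, hAsum, hw]
    ring
  have hS4sum : ∑' (n : S4), x n = w := by
    rw [hS4def, Summable.tsum_union_disjoint hdisj4 (hsum.subtype _) (hsum.subtype _)]
    rw [tsum_singleton k x, hBsum]
    ring
  -- distinctness
  have hNS1 : N ∈ S1 := by exact_mod_cast hNF1
  have hNS2 : N ∉ S2 := by
    rintro (h | h)
    · exact (Finset.notMem_erase N F1) (by exact_mod_cast h)
    · exact lt_irrefl N (hGmem N h)
  have hmS3 : m ∈ S3 := Or.inl (by exact_mod_cast Finset.mem_Ioc.2 ⟨hkm, le_refl m⟩)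
  have hmS1 : m ∉ S1 := fun h => (Finset.notMem_erase m (Finset.Ioc k N)) (by exact_mod_cast h)
  have hmS2 : m ∉ S2 := by
    rintro (h | h)
    · have : m ∈ F1 := Finset.mem_of_mem_erase (by exact_mod_cast h)
      exact (Finset.notMem_erase m (Finset.Ioc k N)) this
    · have := hGmem m h
      omega
  have hkS4 : k ∈ S4 := Or.inl rfl
  have hkS1 : k ∉ S1 := by
    intro h
    have : k ∈ Finset.Ioc k N := Finset.mem_of_mem_erase (by exact_mod_cast h)
    have := (Finset.mem_Ioc.1 this).1
    omega
  have hkS2 : k ∉ S2 := by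
    rintro (h | h)
    · have : k ∈ Finset.Ioc k N :=
        Finset.mem_of_mem_erase (Finset.mem_of_mem_erase (by exact_mod_cast h))
      have := (Finset.mem_Ioc.1 this).1
      omega
    · have := hGmem k h
      omega
  have hkS3 : k ∉ S3 := by
    rintro (h | h)
    · have := (Finset.mem_Ioc.1 (by exact_mod_cast h : k ∈ Finset.Ioc k m)).1
      omega
    · have := hAmem k h
      omega
  -- conclude
  refine ⟨w, ⟨S1, hS1sum⟩, ?_⟩
  have h12 : S1 ≠ S2 := fun h => hNS2 (h ▸ hNS1)
  have h13 : S1 ≠ S3 := fun h => hmS1 (h.symm ▸ hmS3)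
  have h14 : S1 ≠ S4 := fun h => hkS1 (h.symm ▸ hkS4)
  have h23 : S2 ≠ S3 := fun h => hmS2 (h.symm ▸ hmS3)
  have h24 : S2 ≠ S4 := fun h => hkS2 (h.symm ▸ hkS4)
  have h34 : S3 ≠ S4 := fun h => hkS3 (h.symm ▸ hkS4)
  unfold cardFun
  exact four_le_mk ⟨S1, hS1sum⟩ ⟨S2, hS2sum⟩ ⟨S3, hS3sum⟩ ⟨S4, hS4sum⟩
    (fun h => h12 (congrArg Subtype.val h)) (fun h => h13 (congrArg Subtype.val h))
    (fun h => h14 (congrArg Subtype.val h)) (fun h => h23 (congrArg Subtype.val h))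
    (fun h => h24 (congrArg Subtype.val h)) (fun h => h34 (congrArg Subtype.val h))
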